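/- Let V be a finite-dimensional real inner product space and let U, W be subspaces of V with dim U = dim W. Denote by P_U and P_W the orthogonal projections of V onto U and W respectively, and by ‖·‖ the operator norm. Then ‖(id − P_U) ∘ P_W‖ = ‖P_W ∘ (id − P_U)‖ = ‖(id − P_W) ∘ P_U‖ = ‖P_U ∘ (id − P_W)‖. (This is the norm characterization of the gap θ between two equal-dimensional subspaces used in equation (3.6) of the paper: θ = |||(I−P_J^k)Q_J^h|||_a = |||Q_J^h(I−P_J^k)|||_a = |||Q_{J,⊥}^h P_J^k|||_a = |||P_J^k Q_{J,⊥}^h|||_a.) -/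

import Mathlib

section GapAux

open Module ContinuousLinearMap

variable {V : Type*} [NormedAddCommGroup V] [InnerProductSpace ℝ V] [FiniteDimensional ℝ V]

/-- restricted projection `U → W`. -/
noncomputable def gapT (U W : Submodule ℝ V) : U →L[ℝ] W :=
  (Submodule.orthogonalProjectionOnto W).comp U.subtypeL

lemma gapT_adjoint (U W : Submodule ℝ V) :
    ContinuousLinearMap.adjoint (gapT U W) = gapT W U := by
  symm
  rw [ContinuousLinearMap.eq_adjoint_iff]
  intro x y
  simp only [gapT, ContinuousLinearMap.comp_apply, Submodule.subtypeL_apply]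
  rw [Submodule.inner_orthogonalProjectionOnto_eq_of_mem_right, real_inner_comm,
    Submodule.inner_orthogonalProjectionOnto_eq_of_mem_left]
  exact real_inner_comm _ _

noncomputable def gapm (U W : Submodule ℝ V) : ℝ :=
  sInf {r : ℝ | ∃ u : U, ‖u‖ = 1 ∧ r = ‖gapT U W u‖}

lemma exists_unit_of_ne_bot {U : Submodule ℝ V} (hU : U ≠ ⊥) : ∃ u : U, ‖u‖ = 1 := by
  obtain ⟨x, hx⟩ := Submodule.exists_mem_ne_zero_of_ne_bot hU
  refine ⟨‖(⟨x, hx.1⟩ : U)‖⁻¹ • ⟨x, hx.1⟩, ?_⟩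
  have h0 : (⟨x, hx.1⟩ : U) ≠ 0 := by
    simp only [ne_eq, Submodule.mk_eq_zero]; exact hx.2
  rw [norm_smul, norm_inv, norm_norm, inv_mul_cancel₀ (norm_ne_zero_iff.mpr h0)]

lemma sInf_norm_eq_inv_norm {E F : Type*} [NormedAddCommGroup E] [NormedSpace ℝ E]
    [NormedAddCommGroup F] [NormedSpace ℝ F] [FiniteDimensional ℝ F] [Nontrivial E]
    (T : E →L[ℝ] F) (g : F →L[ℝ] E) (hgT : ∀ u, g (T u) = u) (hTg : ∀ w, T (g w) = w) :
    sInf {r : ℝ | ∃ u : E, ‖u‖ = 1 ∧ r = ‖T u‖} = ‖g‖⁻¹ := by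
  obtain ⟨u₀, hu₀⟩ := exists_ne (0 : E)
  have hg0 : 0 < ‖g‖ := by
    rw [norm_pos_iff]
    intro h
    exact hu₀ (by rw [← hgT u₀, h, ContinuousLinearMap.zero_apply])
  have hF : Nontrivial F :=
    ⟨T u₀, 0, fun h => hu₀ (by rw [← hgT u₀, h, map_zero])⟩
  have hbdd : BddBelow {r : ℝ | ∃ u : E, ‖u‖ = 1 ∧ r = ‖T u‖} :=
    ⟨0, fun r ⟨u, _, hr⟩ => hr ▸ norm_nonneg _⟩
  have hsne : (Metric.sphere (0:F) 1).Nonempty := NormedSpace.sphere_nonempty.mpr zero_le_one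
  apply le_antisymm
  · -- csInf ≤ ‖g‖⁻¹ : norm attainment for g
    obtain ⟨w₀, hw₀mem, hmax'⟩ := (isCompact_sphere (0:F) 1).exists_isMaxOn hsne
      (g.continuous.norm.continuousOn)
    have hmax : ∀ w ∈ Metric.sphere (0:F) 1, ‖g w‖ ≤ ‖g w₀‖ := fun w hw => hmax' hw
    have hw₀ : ‖w₀‖ = 1 := mem_sphere_zero_iff_norm.mp hw₀mem
    have hMle : ‖g w₀‖ ≤ ‖g‖ := by
      simpa [hw₀] using g.le_opNorm w₀
    have hleM : ‖g‖ ≤ ‖g w₀‖ := by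
      refine g.opNorm_le_bound (norm_nonneg _) fun x => ?_
      rcases eq_or_ne x 0 with rfl | hx
      · simp
      · have hmem : ‖x‖⁻¹ • x ∈ Metric.sphere (0:F) 1 := by
          rw [mem_sphere_zero_iff_norm, norm_smul, norm_inv, norm_norm,
            inv_mul_cancel₀ (norm_ne_zero_iff.mpr hx)]
        have := hmax _ hmem
        rw [map_smul, norm_smul, norm_inv, norm_norm] at this
        have hxpos : 0 < ‖x‖ := norm_pos_iff.mpr hx
        calc ‖g x‖ = ‖x‖ * (‖x‖⁻¹ * ‖g x‖) := by field_simp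
        _ ≤ ‖x‖ * ‖g w₀‖ := by
            apply mul_le_mul_of_nonneg_left this (le_of_lt hxpos)
        _ = ‖g w₀‖ * ‖x‖ := mul_comm _ _
    have hM : ‖g w₀‖ = ‖g‖ := le_antisymm hMle hleM
    have hgw0 : g w₀ ≠ 0 := by
      rw [← norm_ne_zero_iff, hM]; exact ne_of_gt hg0
    refine csInf_le hbdd ⟨‖g w₀‖⁻¹ • g w₀, ?_, ?_⟩
    · rw [norm_smul, norm_inv, norm_norm, inv_mul_cancel₀ (norm_ne_zero_iff.mpr hgw0)]
    · rw [map_smul, hTg, norm_smul, norm_inv, norm_norm, hw₀, hM, mul_one]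
  · -- ‖g‖⁻¹ ≤ csInf
    refine le_csInf ?_ fun r ⟨u, hu, hr⟩ => ?_
    · obtain ⟨u₁, hu₁⟩ : ∃ u : E, ‖u‖ = 1 := by
        refine ⟨‖u₀‖⁻¹ • u₀, ?_⟩
        rw [norm_smul, norm_inv, norm_norm, inv_mul_cancel₀ (norm_ne_zero_iff.mpr hu₀)]
      exact ⟨‖T u₁‖, u₁, hu₁, rfl⟩
    · have h1 : 1 ≤ ‖g‖ * ‖T u‖ := by
        calc (1:ℝ) = ‖u‖ := hu.symm
        _ = ‖g (T u)‖ := by rw [hgT]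
        _ ≤ ‖g‖ * ‖T u‖ := g.le_opNorm _
      rw [hr, inv_eq_one_div, div_le_iff₀ hg0]
      linarith

open scoped RealInnerProductSpace

lemma proj_pyth (W : Submodule ℝ V) (v : V) :
    ‖(Submodule.orthogonalProjectionOnto W v : V)‖^2 + ‖v - Submodule.orthogonalProjectionOnto W v‖^2 = ‖v‖^2 := by
  have horth : ⟪(Submodule.orthogonalProjectionOnto W v : V), v - Submodule.orthogonalProjectionOnto W v⟫ = 0 := by
    rw [real_inner_comm]
    exact Submodule.starProjection_inner_eq_zero v _ (Submodule.coe_mem _)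
  have h := norm_add_sq_real ((Submodule.orthogonalProjectionOnto W v : V)) (v - Submodule.orthogonalProjectionOnto W v)
  rw [horth] at h
  rw [add_sub_cancel] at h
  linarith

lemma norm_proj_apply_le (W : Submodule ℝ V) (v : V) :
    ‖(Submodule.orthogonalProjectionOnto W v : V)‖ ≤ ‖v‖ := by
  have h := proj_pyth W v
  nlinarith [norm_nonneg (Submodule.orthogonalProjectionOnto W v : V), norm_nonneg v,
    sq_nonneg ‖v - Submodule.orthogonalProjectionOnto W v‖]

lemma norm_sub_proj_le (W : Submodule ℝ V) (v : V) :
    ‖v - Submodule.orthogonalProjectionOnto W v‖ ≤ ‖v‖ := by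
  have h := proj_pyth W v
  nlinarith [norm_nonneg (v - (Submodule.orthogonalProjectionOnto W v : V)), norm_nonneg v,
    sq_nonneg ‖(Submodule.orthogonalProjectionOnto W v : V)‖]

lemma gapm_nonneg (U W : Submodule ℝ V) : 0 ≤ gapm U W :=
  Real.sInf_nonneg (fun r ⟨_, _, hr⟩ => hr ▸ norm_nonneg _)

lemma gapm_bddBelow (U W : Submodule ℝ V) :
    BddBelow {r : ℝ | ∃ u : U, ‖u‖ = 1 ∧ r = ‖gapT U W u‖} :=
  ⟨0, fun r ⟨u, _, hr⟩ => hr ▸ norm_nonneg _⟩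

lemma gapm_le (U W : Submodule ℝ V) {u : U} (hu : ‖u‖ = 1) :
    gapm U W ≤ ‖gapT U W u‖ :=
  csInf_le (gapm_bddBelow U W) ⟨u, hu, rfl⟩

lemma norm_gap_eq (U W : Submodule ℝ V) (hU : U ≠ ⊥) :
    ‖(ContinuousLinearMap.id ℝ V - W.subtypeL.comp (Submodule.orthogonalProjectionOnto W)).comp
        (U.subtypeL.comp (Submodule.orthogonalProjectionOnto U))‖ = Real.sqrt (1 - gapm U W ^ 2) := by
  set A := (ContinuousLinearMap.id ℝ V - W.subtypeL.comp (Submodule.orthogonalProjectionOnto W)).comp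
        (U.subtypeL.comp (Submodule.orthogonalProjectionOnto U)) with hA
  have hAapp : ∀ x : V, A x = (Submodule.orthogonalProjectionOnto U x : V)
      - Submodule.orthogonalProjectionOnto W (Submodule.orthogonalProjectionOnto U x : V) := by
    intro x
    simp [hA, ContinuousLinearMap.comp_apply, ContinuousLinearMap.sub_apply,
      ContinuousLinearMap.id_apply, Submodule.subtypeL_apply]
  set m := gapm U W with hm
  have hm0 : 0 ≤ m := gapm_nonneg U W
  obtain ⟨u₁, hu₁⟩ := exists_unit_of_ne_bot hU
  have hne : {r : ℝ | ∃ u : U, ‖u‖ = 1 ∧ r = ‖gapT U W u‖}.Nonempty := ⟨_, u₁, hu₁, rfl⟩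
  -- for unit u : U, ‖u - Qu‖^2 = 1 - ‖gapT u‖^2
  have pyth : ∀ u : U, ‖u‖ = 1 →
      ‖(u : V) - Submodule.orthogonalProjectionOnto W (u : V)‖^2 = 1 - ‖gapT U W u‖^2 := by
    intro u hu
    have h := proj_pyth W (u : V)
    have hcoe : ‖(u : V)‖ = 1 := hu
    have hT : ‖gapT U W u‖ = ‖(Submodule.orthogonalProjectionOnto W (u : V) : V)‖ := rfl
    rw [hcoe] at h
    rw [hT]
    linarith
  apply le_antisymm
  · -- upper bound
    refine A.opNorm_le_bound (Real.sqrt_nonneg _) fun x => ?_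
    have key : ∀ y : U, ‖(y : V) - Submodule.orthogonalProjectionOnto W (y : V)‖
        ≤ Real.sqrt (1 - m ^ 2) * ‖y‖ := by
      intro y
      rcases eq_or_ne y 0 with rfl | hy
      · simp [Real.sqrt_nonneg]
      · set u : U := ‖y‖⁻¹ • y with hudef
        have hu : ‖u‖ = 1 := by
          rw [hudef, norm_smul, norm_inv, norm_norm,
            inv_mul_cancel₀ (norm_ne_zero_iff.mpr hy)]
        have h1 : m ≤ ‖gapT U W u‖ := gapm_le U W hu
        have h2 : ‖(u : V) - Submodule.orthogonalProjectionOnto W (u : V)‖^2 = 1 - ‖gapT U W u‖^2 :=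
          pyth u hu
        have h3 : ‖(u : V) - Submodule.orthogonalProjectionOnto W (u : V)‖ ≤ Real.sqrt (1 - m ^ 2) := by
          rw [← Real.sqrt_sq (norm_nonneg ((u : V) - Submodule.orthogonalProjectionOnto W (u : V)))]
          apply Real.sqrt_le_sqrt
          have : m ^ 2 ≤ ‖gapT U W u‖ ^ 2 := by nlinarith
          rw [h2]; linarith
        have hscale : (y : V) - Submodule.orthogonalProjectionOnto W (y : V)
            = ‖y‖ • ((u : V) - Submodule.orthogonalProjectionOnto W (u : V)) := by
          have hcu : (u : V) = ‖y‖⁻¹ • (y : V) := rfl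
          have hQ : (Submodule.orthogonalProjectionOnto W ((u : V)) : V)
              = ‖y‖⁻¹ • (Submodule.orthogonalProjectionOnto W (y : V) : V) := by
            rw [hcu, map_smul]; rfl
          rw [hQ, hcu, ← smul_sub, smul_smul, mul_inv_cancel₀ (norm_ne_zero_iff.mpr hy),
            one_smul]
        rw [hscale, norm_smul, norm_norm, mul_comm]
        exact mul_le_mul_of_nonneg_right h3 (norm_nonneg _)
    rw [hAapp x]
    calc ‖(Submodule.orthogonalProjectionOnto U x : V) - Submodule.orthogonalProjectionOnto W (Submodule.orthogonalProjectionOnto U x : V)‖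
        ≤ Real.sqrt (1 - m ^ 2) * ‖Submodule.orthogonalProjectionOnto U x‖ := key _
    _ ≤ Real.sqrt (1 - m ^ 2) * ‖x‖ := by
        apply mul_le_mul_of_nonneg_left _ (Real.sqrt_nonneg _)
        exact norm_proj_apply_le U x
  · -- lower bound
    have hA1 : ‖A‖ ≤ 1 := by
      refine A.opNorm_le_bound zero_le_one fun x => ?_
      rw [hAapp x, one_mul]
      calc ‖(Submodule.orthogonalProjectionOnto U x : V) - Submodule.orthogonalProjectionOnto W (Submodule.orthogonalProjectionOnto U x : V)‖
          ≤ ‖(Submodule.orthogonalProjectionOnto U x : V)‖ := norm_sub_proj_le W _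
      _ ≤ ‖x‖ := norm_proj_apply_le U x
    have h1A : 0 ≤ 1 - ‖A‖ ^ 2 := by nlinarith [norm_nonneg A]
    have key : ∀ r ∈ {r : ℝ | ∃ u : U, ‖u‖ = 1 ∧ r = ‖gapT U W u‖},
        Real.sqrt (1 - ‖A‖ ^ 2) ≤ r := by
      rintro r ⟨u, hu, rfl⟩
      have hAu : A (u : V) = (u : V) - Submodule.orthogonalProjectionOnto W (u : V) := by
        rw [hAapp]
        rw [Submodule.orthogonalProjectionOnto_mem_subspace_eq_self u]
      have h1 : ‖(u : V) - Submodule.orthogonalProjectionOnto W (u : V)‖ ≤ ‖A‖ := by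
        rw [← hAu]
        have := A.le_opNorm (u : V)
        have hcoe : ‖(u : V)‖ = 1 := hu
        rw [hcoe, mul_one] at this
        exact this
      have h2 := pyth u hu
      rw [← Real.sqrt_sq (norm_nonneg (gapT U W u))]
      apply Real.sqrt_le_sqrt
      nlinarith [norm_nonneg ((u : V) - Submodule.orthogonalProjectionOnto W (u : V))]
    have hmge : Real.sqrt (1 - ‖A‖ ^ 2) ≤ m := le_csInf hne key
    have hm2 : 1 - ‖A‖ ^ 2 ≤ m ^ 2 := by
      have := Real.sq_sqrt h1A
      nlinarith [Real.sqrt_nonneg (1 - ‖A‖ ^ 2)]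
    rw [← Real.sqrt_sq (norm_nonneg A)]
    apply Real.sqrt_le_sqrt
    linarith

lemma gapm_symm (U W : Submodule ℝ V) (hdim : finrank ℝ U = finrank ℝ W)
    (hU : U ≠ ⊥) (hW : W ≠ ⊥) : gapm U W = gapm W U := by
  haveI : Nontrivial U := Submodule.nontrivial_iff_ne_bot.mpr hU
  haveI : Nontrivial W := Submodule.nontrivial_iff_ne_bot.mpr hW
  by_cases hker : ∃ u : U, u ≠ 0 ∧ gapT U W u = 0
  · obtain ⟨u, hu0, huT⟩ := hker
    have hzero : ∀ (U' W' : Submodule ℝ V) (u' : U'), u' ≠ 0 → gapT U' W' u' = 0 →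
        gapm U' W' = 0 := by
      intro U' W' u' hu0' huT'
      apply le_antisymm _ (gapm_nonneg U' W')
      have hu : ‖(‖u'‖⁻¹ • u')‖ = 1 := by
        rw [norm_smul, norm_inv, norm_norm, inv_mul_cancel₀ (norm_ne_zero_iff.mpr hu0')]
      have h := gapm_le U' W' hu
      rwa [map_smul, huT', smul_zero, norm_zero] at h
    have h1 : gapm U W = 0 := hzero U W u hu0 huT
    -- construct a nonzero w : W with gapT W U w = 0
    set f : U →ₗ[ℝ] W := (gapT U W : U →ₗ[ℝ] W) with hf
    have hninj : ¬ Function.Injective f := by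
      intro h
      exact hu0 (h (a₂ := 0) (by simpa [hf] using huT))
    have hnsurj : ¬ Function.Surjective f := fun h =>
      hninj ((LinearMap.injective_iff_surjective_of_finrank_eq_finrank hdim).mpr h)
    have hrange : LinearMap.range f ≠ ⊤ := fun h => hnsurj (LinearMap.range_eq_top.mp h)
    have horthne : (LinearMap.range f)ᗮ ≠ ⊥ := fun h =>
      hrange (Submodule.orthogonal_eq_bot_iff.mp h)
    obtain ⟨w, hwmem, hw0⟩ := Submodule.exists_mem_ne_zero_of_ne_bot horthne
    have hwT : gapT W U ⟨w, w.2⟩ = 0 := by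
      have : (w : V) ∈ Uᗮ := by
        rw [Submodule.mem_orthogonal]
        intro v hv
        have hsplit : ⟪v - Submodule.orthogonalProjectionOnto W v, (w : V)⟫ = 0 :=
          Submodule.starProjection_inner_eq_zero v (w : V) w.2
        have hrangeorth : ⟪(Submodule.orthogonalProjectionOnto W v : V), (w : V)⟫ = 0 := by
          have hmem : Submodule.orthogonalProjectionOnto W v ∈ LinearMap.range f :=
            ⟨⟨v, hv⟩, rfl⟩
          have := hwmem _ hmem
          rwa [Submodule.coe_inner] at this
        have : ⟪v, (w : V)⟫ = ⟪(Submodule.orthogonalProjectionOnto W v : V), (w : V)⟫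
            + ⟪v - Submodule.orthogonalProjectionOnto W v, (w : V)⟫ := by
          rw [← inner_add_left, add_sub_cancel]
        rw [this, hsplit, hrangeorth, add_zero]
      have : Submodule.orthogonalProjectionOnto U (w : V) = 0 := Submodule.orthogonalProjectionOnto_eq_zero_iff.mpr this
      simp only [gapT, ContinuousLinearMap.comp_apply, Submodule.subtypeL_apply]
      exact this
    have h2 : gapm W U = 0 := hzero W U ⟨w, w.2⟩ (by simpa using hw0) hwT
    rw [h1, h2]
  · -- injective case
    push_neg at hker
    have hinj : Function.Injective (gapT U W) := by
      intro a b hab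
      by_contra hne'
      exact sub_ne_zero.mpr hne' (by_contra fun h =>
        (hker (a - b) (fun h2 => h (by rw [h2])) (by rw [map_sub, hab, sub_self])).elim)
    have hsurj : Function.Surjective (gapT U W) := by
      have : Function.Injective ((gapT U W : U →ₗ[ℝ] W)) := hinj
      exact (LinearMap.injective_iff_surjective_of_finrank_eq_finrank hdim).mp this
    set e : U ≃ₗ[ℝ] W := LinearEquiv.ofBijective (gapT U W : U →ₗ[ℝ] W) ⟨hinj, hsurj⟩ with he
    set g : W →L[ℝ] U := LinearMap.toContinuousLinearMap (e.symm : W →ₗ[ℝ] U) with hg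
    have hgT : ∀ u, g (gapT U W u) = u := fun u => e.symm_apply_apply u
    have hTg : ∀ w, gapT U W (g w) = w := fun w => e.apply_symm_apply w
    have h1 : gapm U W = ‖g‖⁻¹ := sInf_norm_eq_inv_norm (gapT U W) g hgT hTg
    set g' : U →L[ℝ] W := ContinuousLinearMap.adjoint g with hg'
    have hcomp1 : (gapT U W).comp g = ContinuousLinearMap.id ℝ W := by
      ext w; exact congrArg Subtype.val (hTg w)
    have hcomp2 : g.comp (gapT U W) = ContinuousLinearMap.id ℝ U := by
      ext u; exact congrArg Subtype.val (hgT u)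
    have hgT' : ∀ w : W, g' (gapT W U w) = w := by
      intro w
      have : g'.comp (gapT W U) = ContinuousLinearMap.id ℝ W := by
        rw [← gapT_adjoint U W, hg', ← ContinuousLinearMap.adjoint_comp, hcomp1,
          ContinuousLinearMap.adjoint_id]
      exact ContinuousLinearMap.ext_iff.mp this w
    have hTg' : ∀ u : U, gapT W U (g' u) = u := by
      intro u
      have : (gapT W U).comp g' = ContinuousLinearMap.id ℝ U := by
        rw [← gapT_adjoint U W, hg', ← ContinuousLinearMap.adjoint_comp, hcomp2,
          ContinuousLinearMap.adjoint_id]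
      exact ContinuousLinearMap.ext_iff.mp this u
    have h2 : gapm W U = ‖g'‖⁻¹ := sInf_norm_eq_inv_norm (gapT W U) g' hgT' hTg'
    have hnorm : ‖g'‖ = ‖g‖ := ContinuousLinearMap.adjoint.norm_map g
    rw [h1, h2, hnorm]


end GapAux


/-- The norm characterization of the gap between two equal-dimensional subspaces:
for subspaces `U`, `W` of a finite-dimensional real inner product space with
`dim U = dim W`, the operator norms of `(id - P_U) ∘ P_W`, `P_W ∘ (id - P_U)`,
`(id - P_W) ∘ P_U` and `P_U ∘ (id - P_W)` all coincide. -/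
theorem gap_norm_symm {V : Type*} [NormedAddCommGroup V] [InnerProductSpace ℝ V]
    [FiniteDimensional ℝ V] (U W : Submodule ℝ V)
    (hdim : Module.finrank ℝ U = Module.finrank ℝ W) :
    ‖(ContinuousLinearMap.id ℝ V - U.subtypeL.comp U.orthogonalProjectionOnto).comp
        (W.subtypeL.comp W.orthogonalProjectionOnto)‖ =
      ‖(W.subtypeL.comp W.orthogonalProjectionOnto).comp
        (ContinuousLinearMap.id ℝ V - U.subtypeL.comp U.orthogonalProjectionOnto)‖ ∧
    ‖(W.subtypeL.comp W.orthogonalProjectionOnto).comp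
        (ContinuousLinearMap.id ℝ V - U.subtypeL.comp U.orthogonalProjectionOnto)‖ =
      ‖(ContinuousLinearMap.id ℝ V - W.subtypeL.comp W.orthogonalProjectionOnto).comp
        (U.subtypeL.comp U.orthogonalProjectionOnto)‖ ∧
    ‖(ContinuousLinearMap.id ℝ V - W.subtypeL.comp W.orthogonalProjectionOnto).comp
        (U.subtypeL.comp U.orthogonalProjectionOnto)‖ =
      ‖(U.subtypeL.comp U.orthogonalProjectionOnto).comp
        (ContinuousLinearMap.id ℝ V - W.subtypeL.comp W.orthogonalProjectionOnto)‖ := by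
  set P := U.subtypeL.comp (Submodule.orthogonalProjectionOnto U) with hP
  set Q := W.subtypeL.comp (Submodule.orthogonalProjectionOnto W) with hQ
  have hnorm : ∀ B : V →L[ℝ] V, ‖ContinuousLinearMap.adjoint B‖ = ‖B‖ := fun B =>
    ContinuousLinearMap.adjoint.norm_map B
  have hPadj : ContinuousLinearMap.adjoint P = P :=
    (isSelfAdjoint_starProjection U).adjoint_eq
  have hQadj : ContinuousLinearMap.adjoint Q = Q :=
    (isSelfAdjoint_starProjection W).adjoint_eq
  have e1 : ContinuousLinearMap.adjoint ((ContinuousLinearMap.id ℝ V - P).comp Q)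
      = Q.comp (ContinuousLinearMap.id ℝ V - P) := by
    rw [ContinuousLinearMap.adjoint_comp, map_sub, ContinuousLinearMap.adjoint_id, hPadj, hQadj]
  have e3 : ContinuousLinearMap.adjoint ((ContinuousLinearMap.id ℝ V - Q).comp P)
      = P.comp (ContinuousLinearMap.id ℝ V - Q) := by
    rw [ContinuousLinearMap.adjoint_comp, map_sub, ContinuousLinearMap.adjoint_id, hPadj, hQadj]
  have eq1 : ‖(ContinuousLinearMap.id ℝ V - P).comp Q‖
      = ‖Q.comp (ContinuousLinearMap.id ℝ V - P)‖ := by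
    rw [← e1, hnorm]
  have eq3 : ‖(ContinuousLinearMap.id ℝ V - Q).comp P‖
      = ‖P.comp (ContinuousLinearMap.id ℝ V - Q)‖ := by
    rw [← e3, hnorm]
  by_cases hU : U = ⊥
  · have hWrk : Module.finrank ℝ W = 0 := by rw [← hdim, hU, finrank_bot]
    have hW : W = ⊥ := Submodule.finrank_eq_zero.mp hWrk
    have hP0 : P = 0 := by
      rw [hP, hU]
      ext x
      simp [Submodule.orthogonalProjectionOnto_bot]
    have hQ0 : Q = 0 := by
      rw [hQ, hW]
      ext x
      simp [Submodule.orthogonalProjectionOnto_bot]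
    refine ⟨?_, ?_, ?_⟩ <;> simp [hP0, hQ0]
  · have hW : W ≠ ⊥ := by
      intro h
      apply hU
      have : Module.finrank ℝ U = 0 := by rw [hdim, h, finrank_bot]
      exact Submodule.finrank_eq_zero.mp this
    have eq2 : ‖Q.comp (ContinuousLinearMap.id ℝ V - P)‖
        = ‖(ContinuousLinearMap.id ℝ V - Q).comp P‖ := by
      rw [← eq1]
      have hWU := norm_gap_eq W U hW
      have hUW := norm_gap_eq U W hU
      rw [hP, hQ] at *
      rw [hWU, hUW, gapm_symm W U hdim.symm hW hU]
    exact ⟨eq1, eq2, eq3⟩
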